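/- There is a constant C₁>1, depending only on C₀, such that for every finite Borel measure ν on T² and all 0 < ρ ≤ δ < 1, one has ‖ν‖_δ ≤ C₁·‖ν‖_ρ. -/

import Mathlib

open MeasureTheory Metric Filter Topology
open scoped ENNReal

/-- The flat two-torus `ℝ²/ℤ²`, realized as the `L²`-product of two circles of length one. -/
abbrev T2 : Type := PiLp 2 fun _ : Fin 2 => AddCircle (1 : ℝ)

noncomputable instance : MeasurableSpace T2 := borel T2
instance : BorelSpace T2 := ⟨rfl⟩
instance : CompactSpace T2 :=
  (PiLp.homeomorph 2 fun _ : Fin 2 => AddCircle (1 : ℝ)).symm.compactSpace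

/-- The condition `C₀⁻¹ ≤ dm/dLeb ≤ C₀` for the smooth measure `m` in terms of the Haar
probability measure `Leb`. -/
def DensityBounds (C₀ : ℝ) (Leb m : Measure T2) : Prop :=
  ∀ s : Set T2, MeasurableSet s →
    ENNReal.ofReal C₀⁻¹ * Leb s ≤ m s ∧ m s ≤ ENNReal.ofReal C₀ * Leb s

/-- The `ρ`-inner product `⟨ν,ν'⟩_ρ = ρ⁻⁴ ∫ ν(B(z,ρ)) ν'(B(z,ρ)) dm(z)`. -/
noncomputable def rinner (m ν ν' : Measure T2) (ρ : ℝ) : ℝ :=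
  (1 / ρ ^ 4) * ∫ z, (ν (ball z ρ)).toReal * (ν' (ball z ρ)).toReal ∂m

/-- The `ρ`-semi-norm `‖ν‖_ρ = ⟨ν,ν⟩_ρ^{1/2}`. -/
noncomputable def rnorm (m ν : Measure T2) (ρ : ℝ) : ℝ :=
  Real.sqrt (rinner m ν ν ρ)

instance : Fact ((0:ℝ) < 1) := ⟨one_pos⟩


noncomputable def T2homeo : (∀ _ : Fin 2, AddCircle (1:ℝ)) ≃ₜ T2 where
  toEquiv := (WithLp.equiv 2 _).symm
  continuous_toFun := PiLp.continuous_toLp _ _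
  continuous_invFun := PiLp.continuous_ofLp _ _

instance : SecondCountableTopology T2 := T2homeo.symm.isEmbedding.secondCountableTopology

noncomputable def T2addEquiv : (∀ _ : Fin 2, AddCircle (1:ℝ)) ≃+ T2 :=
  { (WithLp.equiv 2 _).symm with map_add' := fun _ _ => rfl }

noncomputable def T2meas : (∀ _ : Fin 2, AddCircle (1:ℝ)) ≃ᵐ T2 := T2homeo.toMeasurableEquiv

noncomputable def pHaar : Measure (∀ _ : Fin 2, AddCircle (1:ℝ)) := Measure.pi fun _ => volume

instance : IsProbabilityMeasure (volume : Measure (AddCircle (1:ℝ))) :=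
  ⟨by simp [AddCircle.measure_univ]⟩

instance : IsProbabilityMeasure pHaar := by unfold pHaar; infer_instance
instance : pHaar.IsAddHaarMeasure := by unfold pHaar; infer_instance

instance : IsProbabilityMeasure (pHaar.map T2meas) :=
  Measure.isProbabilityMeasure_map T2meas.measurable.aemeasurable

example : IsTopologicalAddGroup T2 := inferInstance

instance : (pHaar.map T2meas).IsAddHaarMeasure := by
  have h : (⇑T2meas : _ → T2) = ⇑T2addEquiv := rfl
  rw [h]
  exact T2addEquiv.isAddHaarMeasure_map pHaar
    (PiLp.continuous_toLp _ _) (PiLp.continuous_ofLp _ _)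

lemma leb_eq (Leb : Measure T2) [IsProbabilityMeasure Leb] [Leb.IsAddHaarMeasure] :
    Leb = pHaar.map T2meas :=
  Measure.isAddHaarMeasure_eq_of_isProbabilityMeasure _ _

lemma coord_dist_le (x y : T2) (i : Fin 2) : dist (x i) (y i) ≤ dist x y := by
  rw [PiLp.dist_eq_of_L2]
  rw [show dist (x i) (y i) = Real.sqrt (dist (x i) (y i) ^ 2) by
    rw [Real.sqrt_sq dist_nonneg]]
  apply Real.sqrt_le_sqrt
  exact Finset.single_le_sum (f := fun j => dist (x j) (y j) ^ 2)
    (fun j _ => sq_nonneg _) (Finset.mem_univ i)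

lemma leb_ball_le (z : T2) (r : ℝ) :
    (pHaar.map T2meas) (ball z r) ≤ ENNReal.ofReal (2*r) * ENNReal.ofReal (2*r) := by
  rw [T2meas.map_apply]
  have hsub : (⇑T2meas) ⁻¹' (ball z r) ⊆ Set.univ.pi fun i => closedBall (z i) r := by
    intro w hw
    simp only [Set.mem_preimage, mem_ball] at hw
    intro i _
    exact le_of_lt (lt_of_le_of_lt (coord_dist_le (T2meas w) z i) hw)
  refine (measure_mono hsub).trans ?_
  rw [show (pHaar : Measure _) = Measure.pi fun _ => volume from rfl, Measure.pi_pi]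
  simp only [AddCircle.volume_closedBall]
  rw [Finset.prod_const, Finset.card_univ, Fintype.card_fin]
  rw [pow_two]
  gcongr <;> exact min_le_right _ _

lemma leb_ball_ge (z : T2) (r : ℝ) (h0 : 0 < r) (h2 : r ≤ 2) :
    ENNReal.ofReal (r^2/4) ≤ (pHaar.map T2meas) (ball z r) := by
  rw [T2meas.map_apply]
  have hsub : (Set.univ.pi fun i => closedBall (z i) (r/4)) ⊆ (⇑T2meas) ⁻¹' (ball z r) := by
    intro w hw
    simp only [Set.mem_pi, Set.mem_univ, mem_closedBall, forall_true_left] at hw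
    simp only [Set.mem_preimage, mem_ball]
    rw [PiLp.dist_eq_of_L2]
    rw [show r = Real.sqrt (r^2) by rw [Real.sqrt_sq h0.le]]
    apply Real.sqrt_lt_sqrt
    · positivity
    · have : ∀ i : Fin 2, dist ((T2meas w) i) (z i) ^ 2 ≤ (r/4)^2 := by
        intro i
        have : dist ((T2meas w) i) (z i) ≤ r/4 := hw i
        have h4 : (0:ℝ) ≤ r/4 := by positivity
        nlinarith [dist_nonneg (x := (T2meas w) i) (y := z i)]
      calc ∑ i : Fin 2, dist ((T2meas w) i) (z i) ^ 2 ≤ ∑ _i : Fin 2, (r/4)^2 :=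
            Finset.sum_le_sum fun i _ => this i
        _ = 2 * (r/4)^2 := by rw [Finset.sum_const, Finset.card_univ, Fintype.card_fin, nsmul_eq_mul]; norm_num
        _ < r^2 := by nlinarith
  refine le_trans ?_ (measure_mono hsub)
  rw [show (pHaar : Measure _) = Measure.pi fun _ => volume from rfl, Measure.pi_pi]
  simp only [AddCircle.volume_closedBall]
  rw [Finset.prod_const, Finset.card_univ, Fintype.card_fin]
  have hmin : min 1 (2 * (r/4)) = r/2 := by
    rw [min_eq_right]; ring_nf; linarith
  rw [hmin, show (ENNReal.ofReal (r/2))^2 = ENNReal.ofReal (r/2) * ENNReal.ofReal (r/2) from sq _,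
    ← ENNReal.ofReal_mul (by positivity)]
  apply ENNReal.ofReal_le_ofReal
  nlinarith

lemma measurable_ballMeasure (ν : Measure T2) [SFinite ν] (r : ℝ) :
    Measurable fun z : T2 => ν (ball z r) := by
  have hs : MeasurableSet {p : T2 × T2 | dist p.1 p.2 < r} :=
    (isOpen_lt (continuous_fst.dist continuous_snd) continuous_const).measurableSet
  have h := measurable_measure_prodMk_left (ν := ν) hs
  convert h using 2 with z
  congr 1
  ext y
  simp [mem_ball, dist_comm]

lemma two_conj : Real.HolderConjugate 2 2 := Real.HolderConjugate.two_two

lemma cs_lemma (μ : Measure T2) (S : Set T2) (g : T2 → ℝ≥0∞)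
    (hg : Measurable g) :
    (∫⁻ w in S, g w ∂μ)^2 ≤ μ S * ∫⁻ w in S, g w^2 ∂μ := by
  have h := ENNReal.lintegral_mul_le_Lp_mul_Lq (μ.restrict S) two_conj
    (aemeasurable_const (b := (1:ℝ≥0∞))) hg.aemeasurable
  simp only [Pi.mul_apply, one_mul, ENNReal.one_rpow, lintegral_const,
    Measure.restrict_apply_univ] at h
  have h2 : (∫⁻ w in S, g w ∂μ)^2 ≤
      ((μ S ^ ((1:ℝ)/2)) * ((∫⁻ a in S, g a ^ (2:ℝ) ∂μ) ^ ((1:ℝ)/2)))^2 := by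
    exact pow_le_pow_left' h 2
  refine h2.trans_eq ?_
  rw [mul_pow, ← ENNReal.rpow_natCast (μ S ^ ((1:ℝ)/2)) 2,
    ← ENNReal.rpow_natCast ((∫⁻ a in S, g a ^ (2:ℝ) ∂μ) ^ ((1:ℝ)/2)) 2,
    ← ENNReal.rpow_mul, ← ENNReal.rpow_mul]
  norm_num

lemma stepA (m ν : Measure T2) [IsProbabilityMeasure m] [IsFiniteMeasure ν]
    {ρ δ : ℝ} (hρ : 0 < ρ) (hρδ : ρ ≤ δ) {a : ℝ≥0∞}
    (hlow : ∀ x : T2, a ≤ m (ball x ρ)) (z : T2) :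
    a * ν (ball z δ) ≤ ∫⁻ w in ball z (2*δ), ν (ball w ρ) ∂m := by
  set S := ball z (2*δ) with hS
  have hsub : ∀ x ∈ ball z δ, ball x ρ ⊆ S := by
    intro x hx w hw
    rw [hS, mem_ball]
    calc dist w z ≤ dist w x + dist x z := dist_triangle _ _ _
      _ < ρ + δ := add_lt_add (mem_ball.mp hw) (mem_ball.mp hx)
      _ ≤ 2*δ := by linarith
  have hmeas : Measurable fun x : T2 => (m.restrict S) (ball x ρ) :=
    measurable_ballMeasure (m.restrict S) ρ
  have h1 : a * ν (ball z δ) ≤ ∫⁻ x in ball z δ, (m.restrict S) (ball x ρ) ∂ν := by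
    rw [← setLIntegral_const (ball z δ) a]
    refine setLIntegral_mono hmeas fun x hx => ?_
    rw [Measure.restrict_apply measurableSet_ball,
      Set.inter_eq_left.mpr (hsub x hx)]
    exact hlow x
  refine h1.trans ?_
  -- rewrite as double integral and swap
  have hsmeas : MeasurableSet {p : T2 × T2 | dist p.1 p.2 < ρ} :=
    (isOpen_lt (continuous_fst.dist continuous_snd) continuous_const).measurableSet
  have key : ∫⁻ x in ball z δ, (m.restrict S) (ball x ρ) ∂ν
      = ∫⁻ w in S, (ν.restrict (ball z δ)) (ball w ρ) ∂m := by
    have e1 : ∀ x : T2, (m.restrict S) (ball x ρ)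
        = ∫⁻ w, ({p : T2 × T2 | dist p.1 p.2 < ρ}).indicator (fun _ => (1:ℝ≥0∞)) (x, w)
            ∂(m.restrict S) := by
      intro x
      rw [← one_mul ((m.restrict S) (ball x ρ)),
        ← lintegral_indicator_const (measurableSet_ball (x := x) (ε := ρ)) (1:ℝ≥0∞)]
      refine lintegral_congr fun w => ?_
      classical
      rw [Set.indicator_apply, Set.indicator_apply]
      simp only [Set.mem_setOf_eq, mem_ball]
      rw [dist_comm]
    have e2 : ∀ w : T2, (ν.restrict (ball z δ)) (ball w ρ)
        = ∫⁻ x, ({p : T2 × T2 | dist p.1 p.2 < ρ}).indicator (fun _ => (1:ℝ≥0∞)) (x, w)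
            ∂(ν.restrict (ball z δ)) := by
      intro w
      rw [← one_mul ((ν.restrict (ball z δ)) (ball w ρ)),
        ← lintegral_indicator_const (measurableSet_ball (x := w) (ε := ρ)) (1:ℝ≥0∞)]
      refine lintegral_congr fun x => ?_
      classical
      rw [Set.indicator_apply, Set.indicator_apply]
      simp only [Set.mem_setOf_eq, mem_ball]
    simp_rw [e1]
    rw [lintegral_lintegral_swap]
    · simp_rw [← e2]
    · exact (measurable_const.indicator hsmeas).aemeasurable
  rw [key]
  refine lintegral_mono fun w => ?_
  rw [Measure.restrict_apply measurableSet_ball]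
  exact measure_mono Set.inter_subset_left

lemma core (m ν : Measure T2) [IsProbabilityMeasure m] [IsFiniteMeasure ν]
    {ρ δ : ℝ} (hρ : 0 < ρ) (hρδ : ρ ≤ δ) {a b : ℝ≥0∞} (hb : b ≠ ∞)
    (hlow : ∀ x : T2, a ≤ m (ball x ρ)) (hup : ∀ z : T2, m (ball z (2*δ)) ≤ b) :
    a^2 * ∫⁻ z, (ν (ball z δ))^2 ∂m ≤ b^2 * ∫⁻ w, (ν (ball w ρ))^2 ∂m := by
  have hFρ : Measurable fun w : T2 => ν (ball w ρ) := measurable_ballMeasure ν ρ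
  have hFδ : Measurable fun z : T2 => ν (ball z δ) := measurable_ballMeasure ν δ
  have hs2 : MeasurableSet {p : T2 × T2 | dist p.2 p.1 < 2*δ} :=
    (isOpen_lt (continuous_snd.dist continuous_fst) continuous_const).measurableSet
  set G : T2 → T2 → ℝ≥0∞ := fun z w =>
    ({p : T2 × T2 | dist p.2 p.1 < 2*δ}).indicator (fun p => (ν (ball p.2 ρ))^2) (z, w) with hG
  have hGm : Measurable fun p : T2 × T2 => G p.1 p.2 := by
    have he : (fun p : T2 × T2 => G p.1 p.2)
        = ({p : T2 × T2 | dist p.2 p.1 < 2*δ}).indicator (fun p => (ν (ball p.2 ρ))^2) := by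
      funext p; rfl
    rw [he]
    exact ((hFρ.comp measurable_snd).pow_const 2).indicator hs2
  have step : ∀ z : T2, (a * ν (ball z δ))^2 ≤ b * ∫⁻ w, G z w ∂m := by
    intro z
    have hA := stepA m ν hρ hρδ hlow z
    calc (a * ν (ball z δ))^2 ≤ (∫⁻ w in ball z (2*δ), ν (ball w ρ) ∂m)^2 :=
          pow_le_pow_left' hA 2
      _ ≤ m (ball z (2*δ)) * ∫⁻ w in ball z (2*δ), (ν (ball w ρ))^2 ∂m :=
          cs_lemma m _ _ hFρ
      _ ≤ b * ∫⁻ w, G z w ∂m := by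
          refine mul_le_mul' (hup z) (le_of_eq ?_)
          rw [← lintegral_indicator measurableSet_ball]
          refine lintegral_congr fun w => ?_
          classical
          simp only [hG, Set.indicator_apply, Set.mem_setOf_eq, mem_ball]
  have hmulpow : ∀ z : T2, a^2 * (ν (ball z δ))^2 = (a * ν (ball z δ))^2 :=
    fun z => (mul_pow a _ 2).symm
  calc a^2 * ∫⁻ z, (ν (ball z δ))^2 ∂m = ∫⁻ z, (a * ν (ball z δ))^2 ∂m := by
        rw [← lintegral_const_mul (a^2) (hFδ.pow_const 2)]
        exact lintegral_congr hmulpow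
    _ ≤ ∫⁻ z, b * ∫⁻ w, G z w ∂m ∂m := lintegral_mono step
    _ = b * ∫⁻ z, ∫⁻ w, G z w ∂m ∂m := lintegral_const_mul' _ _ hb
    _ = b * ∫⁻ w, ∫⁻ z, G z w ∂m ∂m := by rw [lintegral_lintegral_swap hGm.aemeasurable]
    _ = b * ∫⁻ w, (ν (ball w ρ))^2 * m (ball w (2*δ)) ∂m := by
        congr 1
        refine lintegral_congr fun w => ?_
        have he : (fun z => G z w) = (ball w (2*δ)).indicator (fun _ => (ν (ball w ρ))^2) := by
          funext z
          classical
          simp only [hG, Set.indicator_apply, Set.mem_setOf_eq, mem_ball]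
          rw [dist_comm]
        rw [he, lintegral_indicator_const measurableSet_ball, mul_comm]
    _ ≤ b * ∫⁻ w, (ν (ball w ρ))^2 * b ∂m :=
        mul_le_mul' le_rfl (lintegral_mono fun w => mul_le_mul' le_rfl (hup w))
    _ = b^2 * ∫⁻ w, (ν (ball w ρ))^2 ∂m := by
        rw [lintegral_mul_const b (hFρ.pow_const 2)]
        ring

noncomputable def rinner' (m ν ν' : Measure T2) (ρ : ℝ) : ℝ :=
  (1 / ρ ^ 4) * ∫ z, (ν (ball z ρ)).toReal * (ν' (ball z ρ)).toReal ∂m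

lemma rinner'_eq (m ν : Measure T2) [IsFiniteMeasure ν] (r : ℝ) :
    rinner' m ν ν r = (1/r^4) * (∫⁻ z, (ν (ball z r))^2 ∂m).toReal := by
  unfold rinner'
  congr 1
  rw [← integral_toReal ((measurable_ballMeasure ν r).pow_const 2).aemeasurable
    (ae_of_all _ fun z => ENNReal.pow_lt_top
      (lt_of_le_of_lt (measure_mono (Set.subset_univ _)) (measure_lt_top ν _)))]
  refine integral_congr_ae (ae_of_all _ fun z => ?_)
  simp only [pow_two, ENNReal.toReal_mul]

lemma I_ne_top (m ν : Measure T2) [IsProbabilityMeasure m] [IsFiniteMeasure ν] (r : ℝ) :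
    (∫⁻ z, (ν (ball z r))^2 ∂m) ≠ ∞ := by
  have h1 : (∫⁻ z, (ν (ball z r))^2 ∂m) ≤ (ν Set.univ)^2 := by
    calc (∫⁻ z, (ν (ball z r))^2 ∂m) ≤ ∫⁻ _, (ν Set.univ)^2 ∂m :=
          lintegral_mono fun z => pow_le_pow_left' (measure_mono (Set.subset_univ _)) 2
      _ = (ν Set.univ)^2 := by rw [lintegral_const, measure_univ (μ := m), mul_one]
  exact ne_of_lt (lt_of_le_of_lt h1 (ENNReal.pow_lt_top (measure_lt_top ν _)))

lemma rinner_eq (m ν : Measure T2) [IsFiniteMeasure ν] (r : ℝ) :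
    rinner m ν ν r = (1/r^4) * (∫⁻ z, (ν (ball z r))^2 ∂m).toReal :=
  rinner'_eq m ν r

/-- There is a constant `C₁ > 1`, depending only on `C₀`, such that for every
finite Borel measure `ν` on `T²` and all `0 < ρ ≤ δ < 1`, one has `‖ν‖_δ ≤ C₁·‖ν‖_ρ`. -/
theorem rnorm_change_of_scale
    (C₀ : ℝ) (hC₀ : 1 ≤ C₀) :
    ∃ C₁ : ℝ, 1 < C₁ ∧
      ∀ (Leb m : Measure T2), IsProbabilityMeasure Leb → Leb.IsAddHaarMeasure →
        IsProbabilityMeasure m → DensityBounds C₀ Leb m →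
        ∀ (ν : Measure T2), IsFiniteMeasure ν →
          ∀ ρ δ : ℝ, 0 < ρ → ρ ≤ δ → δ < 1 →
            rnorm m ν δ ≤ C₁ * rnorm m ν ρ := by
  have hC₀0 : 0 < C₀ := lt_of_lt_of_le one_pos hC₀
  refine ⟨64 * C₀^2, by nlinarith, ?_⟩
  intro Leb m hLp hLh hmp hdb ν hν ρ δ hρ hρδ hδ1
  haveI := hLp; haveI := hLh; haveI := hmp; haveI := hν
  have hδ0 : 0 < δ := lt_of_lt_of_le hρ hρδ
  have hLeb : Leb = pHaar.map T2meas := leb_eq Leb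
  set A : ℝ≥0∞ := ENNReal.ofReal C₀⁻¹ * ENNReal.ofReal (ρ^2/4) with hA
  set B : ℝ≥0∞ := ENNReal.ofReal C₀ * ENNReal.ofReal (16*δ^2) with hB
  have hlow : ∀ x : T2, A ≤ m (ball x ρ) := by
    intro x
    refine le_trans ?_ ((hdb _ measurableSet_ball).1)
    exact mul_le_mul' le_rfl (hLeb ▸ leb_ball_ge x ρ hρ (by linarith))
  have hup : ∀ z : T2, m (ball z (2*δ)) ≤ B := by
    intro z
    refine le_trans ((hdb _ measurableSet_ball).2) ?_
    refine mul_le_mul' le_rfl ?_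
    rw [hLeb]
    refine (leb_ball_le z (2*δ)).trans ?_
    rw [← ENNReal.ofReal_mul (by linarith)]
    exact ENNReal.ofReal_le_ofReal (by nlinarith)
  have hBne : B ≠ ∞ := ENNReal.mul_ne_top ENNReal.ofReal_ne_top ENNReal.ofReal_ne_top
  have hcore := core m ν hρ hρδ hBne hlow hup
  set Iδ := ∫⁻ z, (ν (ball z δ))^2 ∂m with hIδdef
  set Iρ := ∫⁻ z, (ν (ball z ρ))^2 ∂m with hIρdef
  have hIρtop : Iρ ≠ ∞ := I_ne_top m ν ρ
  have hreal : A.toReal^2 * Iδ.toReal ≤ B.toReal^2 * Iρ.toReal := by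
    have h := ENNReal.toReal_mono
      (ENNReal.mul_ne_top (ENNReal.pow_ne_top hBne) hIρtop) hcore
    rwa [ENNReal.toReal_mul, ENNReal.toReal_mul, ENNReal.toReal_pow, ENNReal.toReal_pow] at h
  have hAt : A.toReal = C₀⁻¹ * (ρ^2/4) := by
    rw [hA, ENNReal.toReal_mul, ENNReal.toReal_ofReal (by positivity),
      ENNReal.toReal_ofReal (by positivity)]
  have hBt : B.toReal = C₀ * (16*δ^2) := by
    rw [hB, ENNReal.toReal_mul, ENNReal.toReal_ofReal (by positivity),
      ENNReal.toReal_ofReal (by positivity)]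
  have hC₀inv : (0:ℝ) < C₀⁻¹ := by positivity
  have hAtpos : (0:ℝ) < A.toReal := by rw [hAt]; positivity
  have hIρ0 : (0:ℝ) ≤ Iρ.toReal := ENNReal.toReal_nonneg
  have hrin : rinner m ν ν δ ≤ (64*C₀^2)^2 * rinner m ν ν ρ := by
    rw [rinner_eq m ν δ, rinner_eq m ν ρ, ← hIδdef, ← hIρdef]
    have hIδle : Iδ.toReal ≤ (B.toReal^2 * Iρ.toReal) / (A.toReal^2) := by
      rw [le_div_iff₀ (by positivity)]
      linarith [hreal]
    calc (1/δ^4) * Iδ.toReal ≤ (1/δ^4) * ((B.toReal^2 * Iρ.toReal)/(A.toReal^2)) :=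
          mul_le_mul_of_nonneg_left hIδle (by positivity)
      _ = (64*C₀^2)^2 * ((1/ρ^4) * Iρ.toReal) := by
          rw [hAt, hBt]
          have hδne : δ ≠ 0 := ne_of_gt hδ0
          have hρne : ρ ≠ 0 := ne_of_gt hρ
          have hCne : C₀ ≠ 0 := ne_of_gt hC₀0
          field_simp
          ring
  have hrinρ : 0 ≤ rinner m ν ν ρ := by
    rw [rinner_eq m ν ρ]
    positivity
  have h1 : rnorm m ν δ ≤ Real.sqrt ((64*C₀^2)^2 * rinner m ν ν ρ) :=
    Real.sqrt_le_sqrt hrin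
  rwa [Real.sqrt_mul (by positivity) _, Real.sqrt_sq (by positivity)] at h1
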